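/- Let T be a bisectorial operator in a Hilbert space H with closed range. Then for all t ≥ 1 and u ∈ H, ‖tT(I+t²T²)^{-1}u‖ ≲ t^{-1}‖u‖, and consequently ∫₁^∞ ‖tT(I+t²T²)^{-1}u‖² dt/t ≲ ‖u‖². -/

import Mathlib

open MeasureTheory Set
noncomputable section

/-- A (closed, densely defined) bisectorial operator in a Hilbert space `H`, encoded via its
dense domain, closed graph, and the uniformly bounded resolvents `R t = (I + i t T)⁻¹`,
`t ∈ ℝ` (uniform bounds on the resolvents along the imaginary axis are equivalent to
bisectoriality). -/
structure BisectorialOp (H : Type*) [NormedAddCommGroup H] [InnerProductSpace ℂ H]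
    [CompleteSpace H] where
  T : H →ₗ.[ℂ] H
  dense_dom : Dense (T.domain : Set H)
  closed_graph : IsClosed (T.graph : Set (H × H))
  /-- the resolvents `R t = (I + i t T)⁻¹` -/
  R : ℝ → H →L[ℂ] H
  bound : ℝ
  hR_mem : ∀ (t : ℝ) (x : H), ∃ h : R t x ∈ T.domain,
    R t x + (Complex.I * (t : ℂ)) • T ⟨R t x, h⟩ = x
  hR_inv : ∀ (t : ℝ) (y : T.domain), R t ((y : H) + (Complex.I * (t : ℂ)) • T y) = y
  hR_bound : ∀ t : ℝ, ‖R t‖ ≤ bound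

/-- `ψ_t(T) = tT(I + t²T²)⁻¹ = ((I + itT)⁻¹ - (I - itT)⁻¹)/(2i)`. -/
def BisectorialOp.psi {H : Type*} [NormedAddCommGroup H] [InnerProductSpace ℂ H]
    [CompleteSpace H] (S : BisectorialOp H) (t : ℝ) : H →L[ℂ] H :=
  (2 * Complex.I)⁻¹ • (S.R (-t) - S.R t)

theorem pmap_open_mapping
    {H : Type*} [NormedAddCommGroup H] [InnerProductSpace ℂ H] [CompleteSpace H]
    (T : H →ₗ.[ℂ] H) (hgraph : IsClosed (T.graph : Set (H × H)))
    (hclosed : IsClosed (Set.range fun x : T.domain => T x)) :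
    ∃ c > 0, ∀ x : T.domain, ∃ q : T.domain, T q = T x ∧ ‖(q : H)‖ ≤ c * ‖T x‖ := by
  set K : Submodule ℂ H := LinearMap.range T.toFun with hK
  have hKset : (K : Set H) = Set.range fun x : T.domain => T x := by
    ext y; simp [hK, LinearMap.mem_range]
  haveI : CompleteSpace T.graph := (hgraph.completeSpace_coe)
  haveI : CompleteSpace K := by
    have : IsClosed (K : Set H) := hKset ▸ hclosed
    exact this.completeSpace_coe
  have hsnd : ∀ g : T.graph, (g : H × H).2 ∈ K := by
    rintro ⟨g, hg⟩
    rcases (T.mem_graph_iff).1 hg with ⟨y, hy1, hy2⟩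
    exact ⟨y, hy2⟩
  let f : T.graph →L[ℂ] K :=
    { toFun := fun g => ⟨(g : H × H).2, hsnd g⟩
      map_add' := by intros; rfl
      map_smul' := by intros; rfl
      cont := by
        apply Continuous.subtype_mk
        exact continuous_snd.comp continuous_subtype_val }
  have hsurj : Function.Surjective f := by
    rintro ⟨w, hw⟩
    rcases hw with ⟨x, hx⟩
    exact ⟨⟨(x, T x), T.mem_graph x⟩, Subtype.ext hx⟩
  obtain ⟨c, hc0, hc⟩ := f.exists_preimage_norm_le hsurj
  refine ⟨c, hc0, fun x => ?_⟩
  obtain ⟨g, hg1, hg2⟩ := hc ⟨T x, ⟨x, rfl⟩⟩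
  rcases (T.mem_graph_iff).1 g.2 with ⟨q, hq1, hq2⟩
  refine ⟨q, ?_, ?_⟩
  · rw [hq2]
    exact congrArg Subtype.val hg1
  · calc ‖(q : H)‖ = ‖(g : H × H).1‖ := by rw [hq1]
    _ ≤ ‖(g : H × H)‖ := norm_fst_le _
    _ ≤ c * ‖(⟨T x, ⟨x, rfl⟩⟩ : K)‖ := hg2
    _ = c * ‖T x‖ := rfl


/-- If `T` is bisectorial with closed range, then for all `t ≥ 1` and `u ∈ H` we
have `‖tT(I+t²T²)⁻¹u‖ ≲ t⁻¹‖u‖`, and consequently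
`∫₁^∞ ‖tT(I+t²T²)⁻¹u‖² dt/t ≲ ‖u‖²`. -/
theorem bisectorial_closed_range_large_time
    {H : Type*} [NormedAddCommGroup H] [InnerProductSpace ℂ H] [CompleteSpace H]
    (S : BisectorialOp H)
    (hclosed : IsClosed (Set.range fun x : S.T.domain => S.T x)) :
    ∃ C : ℝ, 0 < C ∧
      (∀ t : ℝ, 1 ≤ t → ∀ u : H, ‖S.psi t u‖ ≤ C * t⁻¹ * ‖u‖) ∧
      (∀ u : H, ∫⁻ t in Set.Ioi (1 : ℝ), ENNReal.ofReal (‖S.psi t u‖ ^ 2 / t)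
        ≤ ENNReal.ofReal (C * ‖u‖ ^ 2)) := by
  obtain ⟨c, hc0, hc⟩ := pmap_open_mapping S.T S.closed_graph hclosed
  set B := S.bound with hBdef
  have hB0 : 0 ≤ B := le_trans (norm_nonneg _) (S.hR_bound 0)
  have hRB : ∀ (s : ℝ) (y : H), ‖S.R s y‖ ≤ B * ‖y‖ := fun s y =>
    ((S.R s).le_opNorm y).trans (mul_le_mul_of_nonneg_right (S.hR_bound s) (norm_nonneg y))
  -- resolvent identity on the range
  have hres : ∀ (s : ℝ) (x : S.T.domain),
      (Complex.I * (s : ℂ)) • S.R s (S.T x) = (x : H) - S.R s (x : H) := by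
    intro s x
    have h := S.hR_inv s x
    rw [map_add, ContinuousLinearMap.map_smul] at h
    exact eq_sub_of_add_eq' h
  have hresn : ∀ (s : ℝ), 0 < s → ∀ (x : S.T.domain),
      ‖S.R s (S.T x)‖ ≤ (1 + B) / s * ‖(x : H)‖ := by
    intro s hs x
    rw [div_mul_eq_mul_div, le_div_iff₀ hs]
    have h1 : ‖S.R s (S.T x)‖ * s = ‖(Complex.I * (s : ℂ)) • S.R s (S.T x)‖ := by
      rw [norm_smul, norm_mul, Complex.norm_I, Complex.norm_real, one_mul,
        Real.norm_eq_abs, abs_of_pos hs, mul_comm]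
    rw [h1, hres s x]
    calc ‖(x : H) - S.R s (x : H)‖ ≤ ‖(x : H)‖ + ‖S.R s (x : H)‖ := norm_sub_le _ _
      _ ≤ ‖(x : H)‖ + B * ‖(x : H)‖ := by gcongr; exact hRB s _
      _ = (1 + B) * ‖(x : H)‖ := by ring
  -- key coercivity estimate on the range
  set s0 : ℝ := 2 * c * (1 + B) + 1 with hs0def
  have hs0pos : 0 < s0 := by positivity
  set c' : ℝ := 2 * s0 * B with hc'def
  have hc'0 : 0 ≤ c' := by positivity
  have hkey : ∀ (p q : S.T.domain), (p : H) = S.T q → ‖(p : H)‖ ≤ c' * ‖S.T p‖ := by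
    intro p q hpq
    obtain ⟨q', hq'1, hq'2⟩ := hc q
    have hTq' : S.T q' = (p : H) := by rw [hq'1, ← hpq]
    have hq'n : ‖(q' : H)‖ ≤ c * ‖(p : H)‖ := by rwa [← hpq] at hq'2
    have h1 : ‖S.R s0 (p : H)‖ ≤ c * (1 + B) / s0 * ‖(p : H)‖ := by
      calc ‖S.R s0 (p : H)‖ = ‖S.R s0 (S.T q')‖ := by rw [hTq']
        _ ≤ (1 + B) / s0 * ‖(q' : H)‖ := hresn s0 hs0pos q'
        _ ≤ (1 + B) / s0 * (c * ‖(p : H)‖) := by gcongr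
        _ = c * (1 + B) / s0 * ‖(p : H)‖ := by ring
    have h2 : c * (1 + B) / s0 ≤ 1 / 2 := by
      rw [div_le_iff₀ hs0pos]
      nlinarith
    have h3 := S.hR_inv s0 p
    rw [map_add, ContinuousLinearMap.map_smul] at h3
    have h4 : ‖(p : H)‖ ≤ ‖S.R s0 (p : H)‖ + s0 * (B * ‖S.T p‖) := by
      calc ‖(p : H)‖ = ‖S.R s0 (p : H) + (Complex.I * (s0 : ℂ)) • S.R s0 (S.T p)‖ := by
            rw [h3]
        _ ≤ ‖S.R s0 (p : H)‖ + ‖(Complex.I * (s0 : ℂ)) • S.R s0 (S.T p)‖ := norm_add_le _ _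
        _ ≤ ‖S.R s0 (p : H)‖ + s0 * (B * ‖S.T p‖) := by
            gcongr
            rw [norm_smul, norm_mul, Complex.norm_I, Complex.norm_real, one_mul,
              Real.norm_eq_abs, abs_of_pos hs0pos]
            gcongr
            exact hRB s0 _
    have h5 : ‖(p : H)‖ ≤ c * (1 + B) / s0 * ‖(p : H)‖ + s0 * (B * ‖S.T p‖) :=
      h4.trans (add_le_add h1 le_rfl)
    have hpn : 0 ≤ ‖(p : H)‖ := norm_nonneg _
    rw [hc'def]
    nlinarith [h5, mul_le_mul_of_nonneg_right h2 hpn]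
  -- main pointwise bound
  set C1 : ℝ := c' * (1 + B) with hC1
  have hC10 : 0 ≤ C1 := by positivity
  have hmain : ∀ t : ℝ, 1 ≤ t → ∀ u : H, ‖S.psi t u‖ ≤ C1 * t⁻¹ * ‖u‖ := by
    intro t ht u
    have ht0 : (0 : ℝ) < t := lt_of_lt_of_le one_pos ht
    obtain ⟨ha, hea⟩ := S.hR_mem t u
    obtain ⟨hb, heb⟩ := S.hR_mem (-t) u
    set A : S.T.domain := ⟨S.R t u, ha⟩ with hA
    set Bb : S.T.domain := ⟨S.R (-t) u, hb⟩ with hBb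
    set p : S.T.domain := ((2 * Complex.I)⁻¹ : ℂ) • (Bb - A) with hp
    have hpval : (p : H) = S.psi t u := by
      simp [hp, BisectorialOp.psi, hA, hBb, sub_smul, smul_sub]
    have heA : (A : H) + (Complex.I * (t : ℂ)) • S.T A = u := hea
    have heB : (Bb : H) - (Complex.I * (t : ℂ)) • S.T Bb = u := by
      have := heb
      rw [Complex.ofReal_neg] at this
      rw [← this]
      module
    -- p is in the range of T
    set q₀ : S.T.domain := (((2 * Complex.I)⁻¹ * (Complex.I * (t : ℂ))) : ℂ) • (A + Bb)
      with hq₀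
    have hsub : (Bb : H) - (A : H) = (Complex.I * (t : ℂ)) • (S.T A + S.T Bb) := by
      have h := congrArg₂ (fun a b => a - b) heB heA
      linear_combination (norm := module) h
    have hqval : (p : H) = S.T q₀ := by
      rw [hq₀, LinearPMap.map_smul, LinearPMap.map_add, hp]
      push_cast [Submodule.coe_smul, Submodule.coe_sub]
      rw [mul_smul, ← hsub]
    -- bound on T p
    have hTp : S.T p = ((2 * Complex.I)⁻¹ : ℂ) • (S.T Bb - S.T A) := by
      rw [hp, LinearPMap.map_smul, LinearPMap.map_sub]
    have hsum : (Complex.I * (t : ℂ)) • (S.T Bb - S.T A) = (A : H) + (Bb : H) - 2 • u := by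
      have h := congrArg₂ (fun a b => a + b) heA heB
      linear_combination (norm := module) -h
    have hsumn : ‖S.T Bb - S.T A‖ ≤ (2 + 2 * B) / t * ‖u‖ := by
      rw [div_mul_eq_mul_div, le_div_iff₀ ht0]
      have h1 : ‖S.T Bb - S.T A‖ * t = ‖(Complex.I * (t : ℂ)) • (S.T Bb - S.T A)‖ := by
        rw [norm_smul, norm_mul, Complex.norm_I, Complex.norm_real, one_mul,
          Real.norm_eq_abs, abs_of_pos ht0, mul_comm]
      rw [h1, hsum]
      calc ‖(A : H) + (Bb : H) - 2 • u‖ ≤ ‖(A : H)‖ + ‖(Bb : H)‖ + ‖(2 : ℕ) • u‖ := by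
            exact (norm_sub_le _ _).trans (by gcongr; exact norm_add_le _ _)
        _ ≤ B * ‖u‖ + B * ‖u‖ + 2 * ‖u‖ := by
            gcongr
            · exact hRB t u
            · exact hRB (-t) u
            · rw [← Nat.cast_smul_eq_nsmul ℝ, norm_smul]
              simp
        _ = (2 + 2 * B) * ‖u‖ := by ring
    have hTpn : ‖S.T p‖ ≤ (1 + B) / t * ‖u‖ := by
      rw [hTp, norm_smul]
      have h2 : ‖((2 * Complex.I)⁻¹ : ℂ)‖ = 1 / 2 := by
        rw [norm_inv, norm_mul, Complex.norm_I]
        norm_num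
      rw [h2]
      calc 1 / 2 * ‖S.T Bb - S.T A‖ ≤ 1 / 2 * ((2 + 2 * B) / t * ‖u‖) := by
            gcongr
        _ = (1 + B) / t * ‖u‖ := by ring
    calc ‖S.psi t u‖ = ‖(p : H)‖ := by rw [hpval]
      _ ≤ c' * ‖S.T p‖ := hkey p q₀ hqval
      _ ≤ c' * ((1 + B) / t * ‖u‖) := by gcongr
      _ = C1 * t⁻¹ * ‖u‖ := by rw [hC1]; field_simp
  -- assemble
  refine ⟨(max C1 1) ^ 2, by positivity, ?_, ?_⟩
  · intro t ht u
    have ht0 : (0 : ℝ) < t := lt_of_lt_of_le one_pos ht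
    refine (hmain t ht u).trans ?_
    have h1 : C1 ≤ (max C1 1) ^ 2 := by
      nlinarith [le_max_left C1 1, le_max_right C1 1]
    gcongr
  · intro u
    set K : ℝ := (C1 * ‖u‖) ^ 2 with hKdef
    have hK0 : 0 ≤ K := by positivity
    calc ∫⁻ t in Set.Ioi (1 : ℝ), ENNReal.ofReal (‖S.psi t u‖ ^ 2 / t)
        ≤ ∫⁻ t in Set.Ioi (1 : ℝ), ENNReal.ofReal (K * t ^ (-3 : ℝ)) := by
          apply setLIntegral_mono' measurableSet_Ioi
          intro t ht
          have ht1 : (1 : ℝ) < t := ht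
          have ht0 : (0 : ℝ) < t := one_pos.trans ht1
          apply ENNReal.ofReal_le_ofReal
          have hb := hmain t ht1.le u
          have h1 : ‖S.psi t u‖ ^ 2 ≤ (C1 * t⁻¹ * ‖u‖) ^ 2 :=
            pow_le_pow_left₀ (norm_nonneg _) hb 2
          have h2 : (C1 * t⁻¹ * ‖u‖) ^ 2 / t = K * t ^ (-3 : ℝ) := by
            have h3 : t ^ (-3 : ℝ) = (t ^ 3)⁻¹ := by
              rw [show (-3 : ℝ) = -((3 : ℕ) : ℝ) by norm_num, Real.rpow_neg ht0.le,
                Real.rpow_natCast]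
            rw [h3, hKdef]
            field_simp
          rw [← h2]
          gcongr
      _ = ENNReal.ofReal (K * (1 / 2)) := by
          rw [← ofReal_integral_eq_lintegral_ofReal]
          · congr 1
            rw [MeasureTheory.integral_const_mul,
              integral_Ioi_rpow_of_lt (by norm_num) one_pos]
            norm_num
          · exact (integrableOn_Ioi_rpow_of_lt (by norm_num) one_pos).const_mul K
          · filter_upwards [ae_restrict_mem measurableSet_Ioi] with t ht
            have ht0 : (0 : ℝ) ≤ t := le_of_lt (one_pos.trans ht)
            positivity
      _ ≤ ENNReal.ofReal ((max C1 1) ^ 2 * ‖u‖ ^ 2) := by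
          apply ENNReal.ofReal_le_ofReal
          rw [hKdef]
          have hm : C1 ^ 2 * ‖u‖ ^ 2 ≤ (max C1 1) ^ 2 * ‖u‖ ^ 2 :=
            mul_le_mul_of_nonneg_right
              (pow_le_pow_left₀ hC10 (le_max_left _ _) 2) (sq_nonneg _)
          nlinarith [hm, sq_nonneg (C1 * ‖u‖)]
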